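/- Let Γ be a weighted forest (a finite acyclic graph with integer weights a_v on vertices), and let Q(Γ) be the matrix with Q_{ii} = -a_i, Q_{ij} = -1 if vertices i and j are adjacent, and 0 otherwise. Then det Q(Γ) = Σ_{S} (-1)^{|S|} · Π_{v ∉ Supp(S)} (-a_v), where the sum is over all matchings S of Γ (sets of pairwise disjoint edges) and Supp(S) is the set of endpoints of edges in S. -/

import Mathlib

open Classical Finset

/-- The matrix `Q(Γ)` of a weighted graph: `-a i` on the diagonal, `-1` for
adjacent vertices, `0` otherwise. -/
noncomputable def wMatrix {V : Type*} [Fintype V] (G : SimpleGraph V) (a : V → ℤ) :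
    Matrix V V ℤ :=
  Matrix.of fun i j => if i = j then -a i else if G.Adj i j then (-1 : ℤ) else 0

/-- The determinant `d(Γ)` of a weighted graph. -/
noncomputable def wDet {V : Type*} [Fintype V] (G : SimpleGraph V) (a : V → ℤ) : ℤ :=
  (wMatrix G a).det

/-- The determinant of the weighted graph obtained by deleting a set `s` of
vertices (and all incident edges). -/
noncomputable def wDetDel {V : Type*} [Fintype V] (G : SimpleGraph V) (a : V → ℤ)
    (s : Set V) : ℤ :=
  wDet (SimpleGraph.comap (Subtype.val : {v // v ∉ s} → V) G) (fun v => a v.1)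

set_option linter.unusedSectionVars false


namespace ForestDetAux

variable {V : Type*} [Fintype V] [DecidableEq V]


variable {V : Type*} [Fintype V] [DecidableEq V]

def IsMatching (S : Finset (Sym2 V)) : Prop :=
  ∀ e ∈ S, ∀ f ∈ S, e ≠ f → ∀ v : V, v ∈ e → v ∉ f

theorem IsMatching.subset {S T : Finset (Sym2 V)} (h : IsMatching T) (hST : S ⊆ T) :
    IsMatching S := fun e he f hf hef v hv => h e (hST he) f (hST hf) hef v hv

noncomputable def mOther (S : Finset (Sym2 V)) (v : V) : V :=
  if h : ∃ e ∈ S, v ∈ e then Sym2.Mem.other' h.choose_spec.2 else v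

theorem mOther_spec {S : Finset (Sym2 V)} (hM : IsMatching S) {v : V} {e : Sym2 V}
    (he : e ∈ S) (hv : v ∈ e) : s(v, mOther S v) = e := by
  have h : ∃ e ∈ S, v ∈ e := ⟨e, he, hv⟩
  have hc : h.choose = e := by
    by_contra hne
    exact hM h.choose h.choose_spec.1 e he hne v h.choose_spec.2 hv
  rw [mOther, dif_pos h, Sym2.other_spec' h.choose_spec.2, hc]

theorem mOther_eq_self {S : Finset (Sym2 V)} {v : V} (h : ¬ ∃ e ∈ S, v ∈ e) :
    mOther S v = v := dif_neg h

theorem mOther_invol {S : Finset (Sym2 V)} (hM : IsMatching S) :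
    Function.Involutive (mOther S) := by
  intro v
  by_cases h : ∃ e ∈ S, v ∈ e
  · obtain ⟨e, he, hv⟩ := h
    have h1 : s(v, mOther S v) = e := mOther_spec hM he hv
    have h2 : mOther S v ∈ e := h1 ▸ Sym2.mem_mk_right v (mOther S v)
    have h3 : s(mOther S v, mOther S (mOther S v)) = e := mOther_spec hM he h2
    rw [← h1, Sym2.eq_iff] at h3
    rcases h3 with ⟨h3a, h3b⟩ | ⟨_, h3b⟩
    · rw [h3b, h3a]
    · exact h3b
  · rw [mOther_eq_self h]
    exact mOther_eq_self h

noncomputable def mPerm (S : Finset (Sym2 V)) : Equiv.Perm V :=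
  if h : Function.Involutive (mOther S) then h.toPerm else 1

theorem mPerm_apply {S : Finset (Sym2 V)} (hM : IsMatching S) (v : V) :
    mPerm S v = mOther S v := by
  rw [mPerm, dif_pos (mOther_invol hM), Function.Involutive.coe_toPerm]

theorem mPerm_empty : mPerm (∅ : Finset (Sym2 V)) = 1 := by
  ext v
  rw [mPerm_apply (by intro e he; simp at he) v, mOther_eq_self (by simp)]
  rfl


noncomputable def orbitWalk (G : SimpleGraph V) (σ : Equiv.Perm V) (x : V)
    (h : ∀ n : ℕ, G.Adj ((σ ^ n) x) ((σ ^ (n + 1)) x)) : (n : ℕ) → G.Walk x ((σ ^ n) x)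
  | 0 => SimpleGraph.Walk.nil.copy rfl (by simp)
  | n + 1 => (orbitWalk G σ x h n).concat (h n)

theorem orbitWalk_support (G : SimpleGraph V) (σ : Equiv.Perm V) (x : V)
    (h : ∀ n : ℕ, G.Adj ((σ ^ n) x) ((σ ^ (n + 1)) x)) (n : ℕ) :
    (orbitWalk G σ x h n).support = (List.range (n + 1)).map (fun m => (σ ^ m) x) := by
  induction n with
  | zero => simp [orbitWalk, List.range_succ]
  | succ n ih =>
    rw [orbitWalk, SimpleGraph.Walk.support_concat, ih]
    simp [List.range_succ]

theorem orbitWalk_length (G : SimpleGraph V) (σ : Equiv.Perm V) (x : V)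
    (h : ∀ n : ℕ, G.Adj ((σ ^ n) x) ((σ ^ (n + 1)) x)) (n : ℕ) :
    (orbitWalk G σ x h n).length = n := by
  induction n with
  | zero => simp [orbitWalk]
  | succ n ih => rw [orbitWalk, SimpleGraph.Walk.length_concat, ih]

theorem good_sq {G : SimpleGraph V} (hG : G.IsAcyclic) (σ : Equiv.Perm V)
    (hσ : ∀ v, σ v = v ∨ G.Adj v (σ v)) (v : V) : σ (σ v) = v := by
  by_contra hvv
  have hv1 : σ v ≠ v := fun h => hvv (by rw [h]; exact h)
  have key : ∀ n : ℕ, σ ((σ ^ n) v) = (σ ^ n) (σ v) := by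
    intro n
    rw [← Equiv.Perm.mul_apply, ← Equiv.Perm.mul_apply, ← pow_succ', pow_succ]
  have hnf : ∀ n : ℕ, σ ((σ ^ n) v) ≠ (σ ^ n) v := by
    intro n hEq
    rw [key] at hEq
    exact hv1 ((σ ^ n).injective hEq)
  have hadj : ∀ n : ℕ, G.Adj ((σ ^ n) v) ((σ ^ (n + 1)) v) := by
    intro n
    rcases hσ ((σ ^ n) v) with h | h
    · exact absurd h (hnf n)
    · have h2 : σ ((σ ^ n) v) = (σ ^ (n + 1)) v := by
        rw [← Equiv.Perm.mul_apply, ← pow_succ']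
      rwa [h2] at h
  have hex : ∃ n, 0 < n ∧ (σ ^ n) v = v :=
    ⟨orderOf σ, orderOf_pos σ, by rw [pow_orderOf_eq_one]; rfl⟩
  set k := Nat.find hex with hkdef
  have hk : 0 < k ∧ (σ ^ k) v = v := Nat.find_spec hex
  have hmin : ∀ m, m < k → ¬(0 < m ∧ (σ ^ m) v = v) := fun m hm => Nat.find_min hex hm
  have hk1 : k ≠ 1 := by
    intro h
    have h2 := hk.2
    rw [h, pow_one] at h2
    exact hv1 h2
  have hk2 : k ≠ 2 := by
    intro h
    have h2 := hk.2
    rw [h, pow_two, Equiv.Perm.mul_apply] at h2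
    exact hvv h2
  have hk3 : 3 ≤ k := by
    have := hk.1
    omega
  have hinj : ∀ a b : ℕ, a < k → b < k → (σ ^ a) v = (σ ^ b) v → a = b := by
    have aux : ∀ a b : ℕ, a < b → b < k → (σ ^ a) v ≠ (σ ^ b) v := by
      intro a b hab hbk hEq
      have h1 : (σ ^ a) ((σ ^ (b - a)) v) = (σ ^ a) v := by
        rw [← Equiv.Perm.mul_apply, ← pow_add, Nat.add_sub_cancel' (le_of_lt hab), ← hEq]
      have h2 : (σ ^ (b - a)) v = v := (σ ^ a).injective h1
      exact hmin (b - a) (by omega) ⟨by omega, h2⟩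
    intro a b ha hb hEq
    rcases lt_trichotomy a b with h | h | h
    · exact absurd hEq (aux a b h hb)
    · exact h
    · exact absurd hEq.symm (aux b a h ha)
  have hk' : k - 1 + 1 = k := by
    have := hk.1
    omega
  have hsupp : (orbitWalk G σ v hadj (k - 1)).support
      = (List.range k).map (fun m => (σ ^ m) v) := by
    rw [orbitWalk_support, hk']
  have hnodup : (orbitWalk G σ v hadj (k - 1)).support.Nodup := by
    rw [hsupp]
    refine List.Nodup.map_on ?_ List.nodup_range
    intro a ha b hb hEq
    rw [List.mem_range] at ha hb
    rw [hinj a b ha hb hEq]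
  have hpath : (orbitWalk G σ v hadj (k - 1)).IsPath :=
    (SimpleGraph.Walk.isPath_def _).mpr hnodup
  have hadjlast : G.Adj v ((σ ^ (k - 1)) v) := by
    have h := hadj (k - 1)
    rw [hk', hk.2] at h
    exact h.symm
  have heq := SimpleGraph.isAcyclic_iff_path_unique.mp hG ⟨_, hpath⟩
    (SimpleGraph.Path.singleton hadjlast)
  have hlen : (orbitWalk G σ v hadj (k - 1)).length = k - 1 :=
    orbitWalk_length G σ v hadj (k - 1)
  have hlen2 : (orbitWalk G σ v hadj (k - 1)).length = 1 := by
    have h2 := congrArg (fun p : G.Path v ((σ ^ (k - 1)) v) => p.1.length) heq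
    simpa [SimpleGraph.Path.singleton] using h2
  omega


variable {G : SimpleGraph V}

theorem adj_mOther {S : Finset (Sym2 V)} (hS : S ⊆ G.edgeFinset) (hM : IsMatching S)
    {v : V} {e : Sym2 V} (he : e ∈ S) (hv : v ∈ e) : G.Adj v (mOther S v) := by
  rw [← SimpleGraph.mem_edgeSet, mOther_spec hM he hv]
  exact SimpleGraph.mem_edgeFinset.mp (hS he)

theorem mPerm_insert {S : Finset (Sym2 V)} {u w : V} (huw : u ≠ w)
    (heS : s(u, w) ∉ S) (hM : IsMatching (insert s(u, w) S)) :
    mPerm (insert s(u, w) S) = Equiv.swap u w * mPerm S := by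
  have hMS : IsMatching S := hM.subset (Finset.subset_insert _ _)
  have hemem : s(u, w) ∈ insert s(u, w) S := Finset.mem_insert_self _ _
  have hucov : ¬ ∃ e ∈ S, u ∈ e := by
    rintro ⟨f, hf, huf⟩
    exact hM s(u, w) hemem f (Finset.mem_insert_of_mem hf)
      (fun h => heS (h ▸ hf)) u (Sym2.mem_mk_left u w) huf
  have hwcov : ¬ ∃ e ∈ S, w ∈ e := by
    rintro ⟨f, hf, hwf⟩
    exact hM s(u, w) hemem f (Finset.mem_insert_of_mem hf)
      (fun h => heS (h ▸ hf)) w (Sym2.mem_mk_right u w) hwf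
  ext v
  rw [Equiv.Perm.mul_apply, mPerm_apply hM, mPerm_apply hMS]
  by_cases hvu : v = u
  · subst hvu
    have h1 : s(v, mOther (insert s(v, w) S) v) = s(v, w) :=
      mOther_spec hM hemem (Sym2.mem_mk_left v w)
    have h2 : mOther (insert s(v, w) S) v = w := by
      rcases Sym2.eq_iff.mp h1 with ⟨_, h⟩ | ⟨h1', h2'⟩
      · exact h
      · exact absurd h1' huw
    rw [h2, mOther_eq_self hucov, Equiv.swap_apply_left]
  by_cases hvw : v = w
  · subst hvw
    have h1 : s(v, mOther (insert s(u, v) S) v) = s(u, v) :=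
      mOther_spec hM hemem (Sym2.mem_mk_right u v)
    have h2 : mOther (insert s(u, v) S) v = u := by
      rcases Sym2.eq_iff.mp h1 with ⟨h1', _⟩ | ⟨_, h⟩
      · exact absurd h1'.symm huw
      · exact h
    rw [h2, mOther_eq_self hwcov, Equiv.swap_apply_right]
  by_cases hvcov : ∃ e ∈ S, v ∈ e
  · obtain ⟨f, hf, hvf⟩ := hvcov
    have h1 : s(v, mOther (insert s(u, w) S) v) = f :=
      mOther_spec hM (Finset.mem_insert_of_mem hf) hvf
    have h2 : s(v, mOther S v) = f := mOther_spec hMS hf hvf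
    rw [← h2] at h1
    have heq : mOther (insert s(u, w) S) v = mOther S v := by
      rcases Sym2.eq_iff.mp h1 with ⟨_, h⟩ | ⟨h1', h2'⟩
      · exact h
      · exact h2'.trans h1'
    have hmem : mOther S v ∈ f := h2 ▸ Sym2.mem_mk_right v (mOther S v)
    have hne_u : mOther S v ≠ u := fun h => hucov ⟨f, hf, h ▸ hmem⟩
    have hne_w : mOther S v ≠ w := fun h => hwcov ⟨f, hf, h ▸ hmem⟩
    rw [heq, Equiv.swap_apply_of_ne_of_ne hne_u hne_w]
  · have hvcov' : ¬ ∃ e ∈ insert s(u, w) S, v ∈ e := by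
      rintro ⟨f, hf, hvf⟩
      rcases Finset.mem_insert.mp hf with rfl | hf'
      · rcases Sym2.mem_iff.mp hvf with rfl | rfl
        · exact hvu rfl
        · exact hvw rfl
      · exact hvcov ⟨f, hf', hvf⟩
    rw [mOther_eq_self hvcov', mOther_eq_self hvcov,
      Equiv.swap_apply_of_ne_of_ne hvu hvw]

theorem sign_mPerm : ∀ S : Finset (Sym2 V), S ⊆ G.edgeFinset → IsMatching S →
    Equiv.Perm.sign (mPerm S) = (-1 : ℤˣ) ^ S.card := by
  intro S
  induction S using Finset.induction_on with
  | empty => intro _ _; simp [mPerm_empty]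
  | @insert e S heS ih =>
    revert heS
    induction e using Sym2.ind with
    | _ u w =>
      intro heS hS hM
      have hin : s(u, w) ∈ G.edgeFinset := hS (Finset.mem_insert_self _ _)
      have huw : u ≠ w := by
        intro h
        subst h
        exact G.irrefl ((G.mem_edgeSet).mp (SimpleGraph.mem_edgeFinset.mp hin))
      rw [mPerm_insert huw heS hM, map_mul, Equiv.Perm.sign_swap huw,
        ih (fun e he => hS (Finset.mem_insert_of_mem he))
          (hM.subset (Finset.subset_insert _ _)),
        Finset.card_insert_of_notMem heS, pow_succ]
      exact (mul_comm _ _)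

def edgesOf (σ : Equiv.Perm V) : Finset (Sym2 V) :=
  (Finset.univ.filter fun v => σ v ≠ v).image fun v => s(v, σ v)

theorem edgesOf_claim {σ : Equiv.Perm V} (hinv : ∀ v, σ (σ v) = v) {v : V}
    {g : Sym2 V} (hg : g ∈ edgesOf σ) (hvg : v ∈ g) : g = s(v, σ v) := by
  obtain ⟨x, hx, rfl⟩ := Finset.mem_image.mp hg
  rcases Sym2.mem_iff.mp hvg with rfl | rfl
  · rfl
  · rw [hinv x]
    exact Sym2.eq_swap.symm

theorem edgesOf_matching {σ : Equiv.Perm V} (hinv : ∀ v, σ (σ v) = v) :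
    IsMatching (edgesOf σ) := by
  intro e he f hf hef v hv hvf
  exact hef ((edgesOf_claim hinv he hv).trans (edgesOf_claim hinv hf hvf).symm)

theorem edgesOf_subset {σ : Equiv.Perm V} (hgood : ∀ v, σ v = v ∨ G.Adj v (σ v)) :
    edgesOf σ ⊆ G.edgeFinset := by
  intro e he
  obtain ⟨x, hx, rfl⟩ := Finset.mem_image.mp he
  rw [Finset.mem_filter] at hx
  rcases hgood x with h | h
  · exact absurd h hx.2
  · exact SimpleGraph.mem_edgeFinset.mpr ((G.mem_edgeSet).mpr h)

theorem mPerm_edgesOf {σ : Equiv.Perm V} (hinv : ∀ v, σ (σ v) = v) :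
    mPerm (edgesOf σ) = σ := by
  have hM := edgesOf_matching hinv
  ext v
  rw [mPerm_apply hM]
  by_cases h : σ v = v
  · have hnc : ¬ ∃ e ∈ edgesOf σ, v ∈ e := by
      rintro ⟨e, he, hv⟩
      obtain ⟨x, hx, rfl⟩ := Finset.mem_image.mp he
      rw [Finset.mem_filter] at hx
      rcases Sym2.mem_iff.mp hv with rfl | rfl
      · exact hx.2 h
      · exact hx.2 ((hinv x).symm.trans h).symm
    rw [mOther_eq_self hnc, h]
  · have he : s(v, σ v) ∈ edgesOf σ :=
      Finset.mem_image.mpr ⟨v, Finset.mem_filter.mpr ⟨Finset.mem_univ v, h⟩, rfl⟩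
    have hspec := mOther_spec hM he (Sym2.mem_mk_left v (σ v))
    rcases Sym2.eq_iff.mp hspec with ⟨_, h2⟩ | ⟨h1, _⟩
    · exact h2
    · exact absurd h1.symm h

theorem edgesOf_mPerm {S : Finset (Sym2 V)} (hS : S ⊆ G.edgeFinset)
    (hM : IsMatching S) : edgesOf (mPerm S) = S := by
  ext e
  constructor
  · intro he
    obtain ⟨x, hx, rfl⟩ := Finset.mem_image.mp he
    rw [Finset.mem_filter, mPerm_apply hM] at hx
    have hcov : ∃ f ∈ S, x ∈ f := by
      by_contra hc
      exact hx.2 (mOther_eq_self hc)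
    obtain ⟨f, hf, hxf⟩ := hcov
    rw [mPerm_apply hM, mOther_spec hM hf hxf]
    exact hf
  · intro he
    revert he
    induction e using Sym2.ind with
    | _ u w =>
      intro he
      have huS : u ∈ s(u, w) := Sym2.mem_mk_left u w
      have hspec := mOther_spec hM he huS
      have hadj : G.Adj u (mOther S u) := adj_mOther hS hM he huS
      refine Finset.mem_image.mpr ⟨u, Finset.mem_filter.mpr ⟨Finset.mem_univ u, ?_⟩, ?_⟩
      · rw [mPerm_apply hM]
        exact hadj.ne'
      · rw [mPerm_apply hM, hspec]

theorem mPerm_good {S : Finset (Sym2 V)} (hS : S ⊆ G.edgeFinset) (hM : IsMatching S)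
    (v : V) : mPerm S v = v ∨ G.Adj v (mPerm S v) := by
  rw [mPerm_apply hM]
  by_cases h : ∃ e ∈ S, v ∈ e
  · obtain ⟨e, he, hv⟩ := h
    exact Or.inr (adj_mOther hS hM he hv)
  · exact Or.inl (mOther_eq_self h)

end ForestDetAux


open ForestDetAux in
theorem term_eq_aux {V : Type*} [Fintype V] [DecidableEq V] {G : SimpleGraph V}
    (a : V → ℤ) (S : Finset (Sym2 V)) (hS : S ⊆ G.edgeFinset) (hM : IsMatching S) :
    ((Equiv.Perm.sign (mPerm S) : ℤˣ) : ℤ) * ∏ i, wMatrix G a (mPerm S i) i =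
      (-1 : ℤ) ^ S.card *
        ∏ v ∈ Finset.univ.filter (fun v : V => ∀ e ∈ S, v ∉ e), (-a v) := by
  have hsign : ((Equiv.Perm.sign (mPerm S) : ℤˣ) : ℤ) = (-1 : ℤ) ^ S.card := by
    rw [sign_mPerm S hS hM]
    push_cast
    ring
  rw [hsign]
  congr 1
  rw [← Finset.prod_filter_mul_prod_filter_not Finset.univ (fun v => ∀ e ∈ S, v ∉ e)
      (fun i => wMatrix G a (mPerm S i) i)]
  have hcov : ∀ v : V, v ∈ Finset.univ.filter (fun v => ¬ ∀ e ∈ S, v ∉ e) →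
      ∃ e ∈ S, v ∈ e := by
    intro v hv
    rw [Finset.mem_filter] at hv
    have hv2 := hv.2
    push_neg at hv2
    exact hv2
  have hentry : ∀ v : V, (∃ e ∈ S, v ∈ e) → wMatrix G a (mPerm S v) v = -1 := by
    rintro v ⟨e, he, hve⟩
    have hadj : G.Adj v (mPerm S v) := by
      rw [mPerm_apply hM]
      exact adj_mOther hS hM he hve
    have hne : mPerm S v ≠ v := hadj.ne'
    simp [wMatrix, hne, hadj.symm]
  have hother_mem : ∀ v : V, ∀ e ∈ S, v ∈ e → mOther S v ∈ e := by
    intro v e he hve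
    rw [← mOther_spec hM he hve]
    exact Sym2.mem_mk_right v (mOther S v)
  have h1 : ∏ v ∈ Finset.univ.filter (fun v : V => ∀ e ∈ S, v ∉ e),
      wMatrix G a (mPerm S v) v
      = ∏ v ∈ Finset.univ.filter (fun v : V => ∀ e ∈ S, v ∉ e), (-a v) := by
    refine Finset.prod_congr rfl ?_
    intro v hv
    rw [Finset.mem_filter] at hv
    have hfix : mPerm S v = v := by
      rw [mPerm_apply hM]
      exact mOther_eq_self (by rintro ⟨e, he, hve⟩; exact hv.2 e he hve)
    rw [hfix]
    simp [wMatrix]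
  have h2 : ∏ v ∈ Finset.univ.filter (fun v : V => ¬ ∀ e ∈ S, v ∉ e),
      wMatrix G a (mPerm S v) v = 1 := by
    refine Finset.prod_involution (fun v _ => mOther S v) ?_ ?_ ?_ ?_
    · intro v hv
      obtain ⟨e, he, hve⟩ := hcov v hv
      rw [hentry v ⟨e, he, hve⟩, hentry (mOther S v) ⟨e, he, hother_mem v e he hve⟩]
      norm_num
    · intro v hv _
      obtain ⟨e, he, hve⟩ := hcov v hv
      have hadj : G.Adj v (mOther S v) := adj_mOther hS hM he hve
      exact hadj.ne'
    · intro v hv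
      obtain ⟨e, he, hve⟩ := hcov v hv
      rw [Finset.mem_filter]
      refine ⟨Finset.mem_univ _, ?_⟩
      intro hall
      exact hall e he (hother_mem v e he hve)
    · intro v _
      exact mOther_invol hM v
  rw [h1, h2, mul_one]

/-- Lemma 5.1: the determinant of a weighted forest is a sum over matchings. -/
theorem forest_det_matching_expansion {V : Type*} [Fintype V] [DecidableEq V]
    (G : SimpleGraph V) (hG : G.IsAcyclic) (a : V → ℤ) :
    wDet G a =
      ∑ S ∈ G.edgeFinset.powerset.filter
          (fun S => ∀ e ∈ S, ∀ f ∈ S, e ≠ f → ∀ v : V, v ∈ e → v ∉ f),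
        (-1 : ℤ) ^ S.card *
          ∏ v ∈ Finset.univ.filter (fun v : V => ∀ e ∈ S, v ∉ e), (-a v) := by
  rename_i instDec
  obtain rfl : instDec = fun a b => Classical.propDecidable (a = b) := Subsingleton.elim _ _
  have entry_zero : ∀ v w : V, w ≠ v → ¬ G.Adj w v → wMatrix G a w v = 0 := by
    intro v w h1 h2
    simp [wMatrix, h1, h2]
  have hdet : wDet G a = ∑ σ ∈ Finset.univ.filter
      (fun σ : Equiv.Perm V => ∀ v, σ v = v ∨ G.Adj v (σ v)),
      ((Equiv.Perm.sign σ : ℤˣ) : ℤ) * ∏ i, wMatrix G a (σ i) i := by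
    rw [wDet, Matrix.det_apply']
    refine (Finset.sum_subset (Finset.filter_subset _ _) ?_).symm
    intro σ _ hσ
    rw [Finset.mem_filter, not_and] at hσ
    have hσ' := hσ (Finset.mem_univ σ)
    push_neg at hσ'
    obtain ⟨v, hv1, hv2⟩ := hσ'
    have hz : wMatrix G a (σ v) v = 0 :=
      entry_zero v (σ v) hv1 (fun h => hv2 h.symm)
    exact mul_eq_zero_of_right _ (Finset.prod_eq_zero (Finset.mem_univ v) hz)
  rw [hdet]
  refine Finset.sum_nbij' (fun σ => ForestDetAux.edgesOf σ)
    (fun S => ForestDetAux.mPerm S) ?_ ?_ ?_ ?_ ?_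
  · intro σ hσ
    rw [Finset.mem_filter] at hσ
    have hinv := fun v => ForestDetAux.good_sq hG σ hσ.2 v
    rw [Finset.mem_filter, Finset.mem_powerset]
    exact ⟨ForestDetAux.edgesOf_subset hσ.2, ForestDetAux.edgesOf_matching hinv⟩
  · intro S hS
    rw [Finset.mem_filter, Finset.mem_powerset] at hS
    rw [Finset.mem_filter]
    exact ⟨Finset.mem_univ _, ForestDetAux.mPerm_good hS.1 hS.2⟩
  · intro σ hσ
    rw [Finset.mem_filter] at hσ
    exact ForestDetAux.mPerm_edgesOf (fun v => ForestDetAux.good_sq hG σ hσ.2 v)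
  · intro S hS
    rw [Finset.mem_filter, Finset.mem_powerset] at hS
    exact ForestDetAux.edgesOf_mPerm hS.1 hS.2
  · intro σ hσ
    rw [Finset.mem_filter] at hσ
    have hgood := hσ.2
    have hinv := fun v => ForestDetAux.good_sq hG σ hgood v
    have hterm := term_eq_aux a (ForestDetAux.edgesOf σ)
      (ForestDetAux.edgesOf_subset hgood) (ForestDetAux.edgesOf_matching hinv)
    rw [ForestDetAux.mPerm_edgesOf hinv] at hterm
    exact hterm
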